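/- arXiv:2009.02120 — 2 statements merged into one kernel-verified Lean document; each statement's English description precedes it below -/
import Mathlib

section
/- If g is an isometry of a nondegenerate integral lattice L of prime order p, then p - 1 divides the rank of the coinvariant sublattice L_g = (L^g)^⊥. -/
set_option maxHeartbeats 1000000
set_option synthInstance.maxHeartbeats 400000

open Polynomial Finset
open scoped TensorProduct

-- divisibility part
lemma aux_div {M : Type} [AddCommGroup M] [Module ℤ M]
    [Module.Free ℤ M] [Module.Finite ℤ M] (p : ℕ) (hp : p.Prime)
    (h : M →ₗ[ℤ] M) (hh : ∑ i ∈ Finset.range p, (h ^ i : Module.End ℤ M) = 0) :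
    (p - 1) ∣ Module.finrank ℤ M := by
  haveI : Fact p.Prime := ⟨hp⟩
  set W := ℚ ⊗[ℤ] M
  set f : Module.End ℚ W := LinearMap.baseChange ℚ h with hf
  have hfsum : ∑ i ∈ Finset.range p, (f ^ i) = 0 := by
    have := congrArg (Module.End.baseChangeHom ℤ ℚ M) hh
    rw [map_sum, map_zero] at this
    simp only [map_pow] at this
    exact this
  set Φ : ℚ[X] := Polynomial.cyclotomic p ℚ with hΦ
  have hcyc : (Polynomial.aeval f) Φ = 0 := by
    rw [hΦ, Polynomial.cyclotomic_prime]
    simpa [map_sum, map_pow] using hfsum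
  haveI : Fact (Irreducible Φ) := ⟨Polynomial.cyclotomic.irreducible_rat hp.pos⟩
  let φ : ℚ[X] →+* Module.End ℚ W := (Polynomial.aeval f).toRingHom
  have hann : ∀ a ∈ Ideal.span {Φ}, φ a = 0 := by
    intro a ha
    obtain ⟨c, rfl⟩ := Ideal.mem_span_singleton.mp ha
    simp [φ, map_mul, hcyc]
  let ψ : AdjoinRoot Φ →+* Module.End ℚ W := Ideal.Quotient.lift _ φ hann
  letI : Module (AdjoinRoot Φ) W := Module.compHom W ψ
  have hsmul : ∀ (a : AdjoinRoot Φ) (w : W), a • w = ψ a w := fun _ _ => rfl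
  letI : IsScalarTower ℚ (AdjoinRoot Φ) W := by
    constructor
    intro q a w
    obtain ⟨P, rfl⟩ := AdjoinRoot.mk_surjective a
    rw [hsmul, hsmul]
    have h1 : q • (AdjoinRoot.mk Φ) P = (AdjoinRoot.mk Φ) (Polynomial.C q * P) := by
      rw [Algebra.smul_def, map_mul]
      rfl
    rw [h1]
    have h2 : ∀ Q : ℚ[X], ψ ((AdjoinRoot.mk Φ) Q) = φ Q := fun Q =>
      Ideal.Quotient.lift_mk _ _ _
    rw [h2, h2, map_mul]
    have h3 : φ (Polynomial.C q) = q • (1 : Module.End ℚ W) := by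
      simp [φ, Polynomial.aeval_C, Algebra.algebraMap_eq_smul_one]
    simp [h3, Module.End.mul_apply]
  have htower := Module.finrank_mul_finrank ℚ (AdjoinRoot Φ) W
  have hΦ0 : Φ ≠ 0 := Polynomial.cyclotomic_ne_zero p ℚ
  have hdeg : Module.finrank ℚ (AdjoinRoot Φ) = p - 1 := by
    rw [(AdjoinRoot.powerBasis hΦ0).finrank]
    simp [AdjoinRoot.powerBasis, hΦ, Polynomial.natDegree_cyclotomic, Nat.totient_prime hp]
  have hfin : Module.finrank ℚ W = Module.finrank ℤ M := Module.finrank_baseChange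
  rw [← hfin, ← htower, hdeg]
  exact Dvd.intro _ rfl

/-- If `g` is an isometry of a nondegenerate integral lattice `L` of prime
order `p`, then `p - 1` divides the rank of the coinvariant sublattice
`L_g = (L^g)^⊥`. -/
theorem stmt_0 {L : Type} [AddCommGroup L] [Module ℤ L]
    [Module.Free ℤ L] [Module.Finite ℤ L]
    (b : LinearMap.BilinForm ℤ L) (hnd : b.Nondegenerate)
    (hsym : ∀ x y, b x y = b y x)
    (g : L ≃ₗ[ℤ] L) (hiso : ∀ x y, b (g x) (g y) = b x y)
    (p : ℕ) (hp : p.Prime) (hord : orderOf g = p) :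
    (p - 1) ∣ Module.finrank ℤ
      (b.orthogonal (LinearMap.eqLocus (g : L →ₗ[ℤ] L) (LinearMap.id : L →ₗ[ℤ] L))) := by
  classical
  set F : Submodule ℤ L :=
    LinearMap.eqLocus (g : L →ₗ[ℤ] L) (LinearMap.id : L →ₗ[ℤ] L) with hFdef
  set G : L →ₗ[ℤ] L := (g : L →ₗ[ℤ] L) with hGdef
  set N : L →ₗ[ℤ] L := ∑ i ∈ Finset.range p, (G ^ i) with hNdef
  -- basic facts
  have hgp : g ^ p = 1 := by rw [← hord]; exact pow_orderOf_eq_one g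
  have hpow_eq : ∀ (i : ℕ) (x : L), (G ^ i) x = (g ^ i) x := by
    intro i
    induction i with
    | zero => intro x; simp
    | succ n ih =>
      intro x
      rw [pow_succ, pow_succ, Module.End.mul_apply, ih]
      rfl
  have hGp : ∀ x : L, (G ^ p) x = x := by
    intro x; rw [hpow_eq, hgp]; rfl
  have hNapp : ∀ x : L, N x = ∑ i ∈ Finset.range p, (G ^ i) x := by
    intro x; rw [hNdef]; exact LinearMap.sum_apply _ _ _
  have hiso_pow : ∀ (i : ℕ) (x y : L), b ((G ^ i) x) ((G ^ i) y) = b x y := by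
    intro i
    induction i with
    | zero => intro x y; simp
    | succ n ih =>
      intro x y
      rw [pow_succ, Module.End.mul_apply, Module.End.mul_apply, ih]
      exact hiso x y
  -- the shifted sum equals N
  have hshift : ∀ x : L, ∑ i ∈ Finset.range p, (G ^ (i + 1)) x = N x := by
    intro x
    have h1 := Finset.sum_range_succ' (fun i => (G ^ i) x) p
    have h2 := Finset.sum_range_succ (fun i => (G ^ i) x) p
    rw [hNapp]
    have : (∑ i ∈ Finset.range p, (G ^ (i + 1)) x) + (G ^ 0) x
        = (∑ i ∈ Finset.range p, (G ^ i) x) + (G ^ p) x := by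
      rw [← h1, ← h2]
    simpa [hGp x] using this
  -- N y is g-invariant, i.e. N y ∈ F
  have hNmem : ∀ y : L, N y ∈ F := by
    intro y
    have : G (N y) = N y := by
      rw [hNapp]
      rw [map_sum]
      have : ∀ i ∈ Finset.range p, G ((G ^ i) y) = (G ^ (i + 1)) y := by
        intro i _
        rw [pow_succ']
        rfl
      rw [Finset.sum_congr rfl this, hshift]
      exact hNapp y
    exact this
  -- b (N x) y = b x (N y)
  have hbN : ∀ x y : L, b (N x) y = b x (N y) := by
    intro x y
    rw [hNapp, map_sum, LinearMap.sum_apply]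
    have step : ∀ i ∈ Finset.range p, b ((G ^ i) x) y = b x ((G ^ (p - i)) y) := by
      intro i hi
      have hip : i ≤ p := le_of_lt (Finset.mem_range.mp hi)
      have : (G ^ i) ((G ^ (p - i)) y) = y := by
        rw [← Module.End.mul_apply, ← pow_add]
        have : i + (p - i) = p := by omega
        rw [this]
        exact hGp y
      conv_lhs => rw [← this]
      rw [hiso_pow]
    rw [Finset.sum_congr rfl step, ← map_sum]
    congr 1
    have hrefl := Finset.sum_range_reflect (fun j => (G ^ (j + 1)) y) p
    have : ∀ j ∈ Finset.range p, (G ^ (p - 1 - j + 1)) y = (G ^ (p - j)) y := by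
      intro j hj
      have := Finset.mem_range.mp hj
      congr 2
      omega
    rw [← Finset.sum_congr rfl this, hrefl, hshift, hNapp]
  -- members of F are fixed by all powers
  have hFfix : ∀ (i : ℕ) (n : L), n ∈ F → (G ^ i) n = n := by
    intro i n hn
    have hn1 : G n = n := hn
    induction i with
    | zero => simp
    | succ m ih =>
      rw [pow_succ, Module.End.mul_apply, hn1, ih]
  -- the orthogonal complement equals ker N
  have hC : b.orthogonal F = LinearMap.ker N := by
    ext x
    rw [LinearMap.BilinForm.mem_orthogonal_iff, LinearMap.mem_ker]
    constructor
    · intro hx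
      apply hnd.1
      intro y
      rw [hbN, hsym]
      exact hx (N y) (hNmem y)
    · intro hx n hn
      have hcalc : b n (N x) = (p : ℤ) * b n x := by
        rw [hNapp, map_sum]
        have : ∀ i ∈ Finset.range p, b n ((G ^ i) x) = b n x := by
          intro i _
          conv_lhs => rw [← hFfix i n hn, hiso_pow]
        rw [Finset.sum_congr rfl this, Finset.sum_const, Finset.card_range,
          nsmul_eq_mul]
      rw [hx, map_zero] at hcalc
      have hp0 : (p : ℤ) ≠ 0 := by exact_mod_cast hp.ne_zero
      have : b n x = 0 := by
        rcases mul_eq_zero.mp hcalc.symm with h | h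
        · exact absurd h hp0
        · exact h
      exact this
  rw [hC]
  have hMeq : (LinearMap.ker N).module = AddCommGroup.toIntModule ↥(LinearMap.ker N) :=
    @Subsingleton.elim _ (@Unique.instSubsingleton _ AddCommGroup.uniqueIntModule) _ _
  rw [← hMeq]
  letI : Module ℤ ↥(LinearMap.ker N) := (LinearMap.ker N).module
  haveI : IsNoetherian ℤ L := isNoetherian_of_isNoetherianRing_of_finite ℤ L
  haveI : Module.Finite ℤ ↥(LinearMap.ker N) :=
    Module.Finite.iff_fg.mpr (IsNoetherian.noetherian _)
  have hrestrict : ∀ x ∈ LinearMap.ker N, G x ∈ LinearMap.ker N := by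
    intro x hx
    rw [LinearMap.mem_ker] at hx ⊢
    have : N (G x) = G (N x) := by
      rw [hNapp, hNapp, map_sum]
      apply Finset.sum_congr rfl
      intro i _
      rw [← Module.End.mul_apply, ← Module.End.mul_apply, ← pow_succ, ← pow_succ']
    rw [this, hx, map_zero]
  set h := G.restrict hrestrict with hhdef
  have hhsum : ∑ i ∈ Finset.range p, h ^ i = 0 := by
    apply LinearMap.ext
    intro x
    have hcoe : (((∑ i ∈ Finset.range p, h ^ i) x : L))
        = ∑ i ∈ Finset.range p, (((h ^ i) x : L)) := by
      rw [LinearMap.sum_apply]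
      simp [Submodule.coe_sum]
    have hpowx : ∀ i : ℕ, (((h ^ i) x : L)) = (G ^ i) (x : L) := by
      intro i
      rw [hhdef, Module.End.pow_restrict, LinearMap.restrict_apply]
    simp only [LinearMap.zero_apply]
    apply Subtype.ext
    rw [hcoe]
    simp only [hpowx]
    rw [← hNapp]
    exact x.2
  exact aux_div p hp h hhsum
end

section
/- Let M ↪ L be a primitive embedding of nondegenerate even lattices defined by a gluing subgroup H ⊆ M^♯. For each v ∈ M, the divisibility of v in L equals max{d ∈ ℕ : the class of v/d lies in H^⊥ ⊆ M^♯}. -/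
open scoped TensorProduct

/-- The natural map `L → ℚ ⊗ L`. -/
noncomputable def ratMap (L : Type) [AddCommGroup L] [Module ℤ L] :
    L →ₗ[ℤ] ℚ ⊗[ℤ] L :=
  TensorProduct.mk ℤ ℚ L 1

/-- for a primitive embedding of even lattices `M ↪ L` with gluing
subgroup `H ⊆ M^♯` (here `H` is realized intrinsically as the image of `L` under the
orthogonal projection `p` to `M ⊗ ℚ`, modulo `M`), the divisibility `(v, L)` of
`v ∈ M` equals `max {d ∈ ℕ : v/d ∈ H^⊥}`, where `v/d ∈ H^⊥` means that `v/d` pairs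
integrally with every element of `H`. -/
theorem stmt_7 {L : Type} [AddCommGroup L] [Module ℤ L]
    [Module.Free ℤ L] [Module.Finite ℤ L]
    (b : LinearMap.BilinForm ℤ L) (hnd : b.Nondegenerate)
    (hsym : ∀ x y, b x y = b y x)
    (heven : ∀ x : L, ∃ k : ℤ, b x x = 2 * k)
    (M : Submodule ℤ L)
    (hprim : ∀ (x : L) (n : ℤ), n ≠ 0 → n • x ∈ M → x ∈ M)
    (hMnd : ∀ v ∈ M, (∀ w ∈ M, b v w = 0) → v = 0)
    -- `p` is the orthogonal projection of `L` into `M ⊗ ℚ`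
    (p : L → ℚ ⊗[ℤ] L)
    (hp1 : ∀ x : L, p x ∈ Submodule.span ℚ (ratMap L '' (M : Set L)))
    (hp2 : ∀ x : L, ∀ y ∈ M, (b.baseChange ℚ) (ratMap L x - p x) (ratMap L y) = 0)
    (v : L) (hv : v ∈ M)
    -- `D` is the divisibility `(v, L) = gcd {v·w : w ∈ L}`
    (D : ℕ) (hD : ∀ d : ℤ, (∀ w : L, d ∣ b v w) ↔ d ∣ (D : ℤ)) :
    D = sSup {d : ℕ |
      ∀ x : L, ∃ k : ℤ, (b.baseChange ℚ) ((d : ℚ)⁻¹ • ratMap L v) (p x) = (k : ℚ)} := by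
  set B := b.baseChange ℚ with hB
  have hBsymm : B.IsSymm := LinearMap.BilinForm.isSymm_iff.mpr (LinearMap.BilinForm.IsSymm.baseChange ℚ ⟨fun x y => hsym x y⟩)
  -- key: B (ratMap v) (p x) = b v x
  have key : ∀ x : L, B (ratMap L v) (p x) = ((b v x : ℤ) : ℚ) := by
    intro x
    have h1 : B (ratMap L v) (ratMap L x - p x) = 0 := by
      have := hp2 x v hv
      have hs := hBsymm.eq (ratMap L x - p x) (ratMap L v)
      rw [← hs, this]
    have h2 : B (ratMap L v) (ratMap L x) = ((b v x : ℤ) : ℚ) := by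
      show B ((1:ℚ) ⊗ₜ[ℤ] v) ((1:ℚ) ⊗ₜ[ℤ] x) = _
      rw [hB, LinearMap.BilinForm.baseChange_tmul]
      simp [zsmul_eq_mul]
    have := map_sub (B (ratMap L v)) (ratMap L x) (p x)
    rw [h1] at this
    have : B (ratMap L v) (ratMap L x) = B (ratMap L v) (p x) := by linarith [this]
    rw [← this, h2]
  -- the set
  have hset : ∀ d : ℕ, (d ∈ {d : ℕ |
      ∀ x : L, ∃ k : ℤ, B ((d : ℚ)⁻¹ • ratMap L v) (p x) = (k : ℚ)}) ↔
      (d = 0 ∨ (d:ℤ) ∣ (D:ℤ)) := by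
    intro d
    rcases eq_or_ne d 0 with rfl | hd
    · simp only [Set.mem_setOf_eq]
      constructor
      · intro _; left; trivial
      · intro _ x
        refine ⟨0, ?_⟩
        simp
    · simp only [Set.mem_setOf_eq]
      have hdq : (d : ℚ) ≠ 0 := by exact_mod_cast hd
      constructor
      · intro h
        right
        rw [← hD]
        intro w
        obtain ⟨k, hk⟩ := h w
        rw [map_smul, LinearMap.smul_apply, key w, smul_eq_mul] at hk
        refine ⟨k, ?_⟩
        have : ((b v w : ℤ) : ℚ) = ((d * k : ℤ) : ℚ) := by
          push_cast
          field_simp at hk ⊢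
          linarith [hk]
        exact_mod_cast this
      · intro h x
        have hdvd : (d:ℤ) ∣ b v x := (hD d).mpr (h.resolve_left hd) x
        obtain ⟨k, hk⟩ := hdvd
        refine ⟨k, ?_⟩
        rw [map_smul, LinearMap.smul_apply, key x, smul_eq_mul, hk]
        push_cast
        field_simp
  rcases eq_or_ne D 0 with rfl | hD0
  · have : {d : ℕ | ∀ x : L, ∃ k : ℤ, B ((d : ℚ)⁻¹ • ratMap L v) (p x) = (k : ℚ)}
        = Set.univ := by
      ext d
      simp only [Set.mem_univ, iff_true]
      rw [hset d]
      right; exact dvd_zero _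
    rw [this]
    have : ¬ BddAbove (Set.univ : Set ℕ) := by
      intro ⟨n, hn⟩
      exact absurd (hn (Set.mem_univ (n+1))) (by omega)
    rw [csSup_of_not_bddAbove this, csSup_empty]; rfl
  · apply le_antisymm
    · apply le_csSup
      · refine ⟨D, fun d hd => ?_⟩
        rcases (hset d).mp hd with rfl | hdvd
        · exact Nat.zero_le _
        · exact Nat.le_of_dvd (Nat.pos_of_ne_zero hD0) (by exact_mod_cast hdvd)
      · rw [hset]; right; exact dvd_rfl
    · apply csSup_le
      · exact ⟨D, by rw [hset]; right; exact dvd_rfl⟩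
      · intro d hd
        rcases (hset d).mp hd with rfl | hdvd
        · exact Nat.zero_le _
        · exact Nat.le_of_dvd (Nat.pos_of_ne_zero hD0) (by exact_mod_cast hdvd)
end
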